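/- Uustalu's Yoneda-like lemma for initial algebras: if T : Set → Set has an initial algebra (μT, in), then for any functor F : Set → Set, the set of paranatural transformations from the difunctor (X,Y) ↦ (T X → Y) to the difunctor (X,Y) ↦ F Y is in bijection with F(μT). -/

import Mathlib

open CategoryTheory

universe u

/-- Uustalu's Yoneda-like lemma for initial algebras: if `(μT, inT)` is an initial
`T`-algebra, then paranatural transformations from the `T`-algebraic difunctor
`(X,Y) ↦ (T X → Y)` to `(X,Y) ↦ F Y` are in bijection with `F(μT)`, via
`φ ↦ φ_{μT}(inT)`. -/
theorem uustalu_yoneda (T F : Type u ⥤ Type u) (μT : Type u) (inT : T.obj μT → μT)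
    (hinit : ∀ (X : Type u) (u : T.obj X → X),
      ∃! f : μT → X, f ∘ inT = u ∘ T.map (↾f)) :
    Function.Bijective
      (fun φ : {φ : ∀ X : Type u, (T.obj X → X) → F.obj X //
          ∀ (X Y : Type u) (u : T.obj X → X) (v : T.obj Y → Y) (f : X → Y),
            f ∘ u = v ∘ T.map (↾f) → F.map (↾f) (φ X u) = φ Y v} =>
        φ.1 μT inT) := by
  have Tmap_comp : ∀ {X Y Z : Type u} (f : Y → Z) (g : X → Y),
      ⇑(T.map (↾(f ∘ g))) = ⇑(T.map (↾f)) ∘ ⇑(T.map (↾g)) := by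
    intro X Y Z f g
    funext x
    exact FunctorToTypes.map_comp_apply T (↾g) (↾f) x
  set fold : ∀ (X : Type u) (u : T.obj X → X), μT → X := fun X u => (hinit X u).choose
    with hfold
  have hfold_spec : ∀ (X : Type u) (u : T.obj X → X),
      fold X u ∘ inT = u ∘ T.map (↾(fold X u)) := fun X u => (hinit X u).choose_spec.1
  have hfold_uniq : ∀ (X : Type u) (u : T.obj X → X) (f : μT → X),
      f ∘ inT = u ∘ T.map (↾f) → f = fold X u := fun X u f h =>
    (hinit X u).choose_spec.2 f h
  have hfold_id : fold μT inT = id := by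
    symm
    apply hfold_uniq
    have : ⇑(T.map (↾(id : μT → μT))) = id := by
      funext x; exact FunctorToTypes.map_id_apply T x
    simp [this]
  constructor
  · rintro ⟨φ₁, hφ₁⟩ ⟨φ₂, hφ₂⟩ h
    simp only at h
    ext X u
    show φ₁ X u = φ₂ X u
    have h₁ := hφ₁ μT X inT u (fold X u) (hfold_spec X u)
    have h₂ := hφ₂ μT X inT u (fold X u) (hfold_spec X u)
    rw [← h₁, ← h₂, h]
  · intro e
    refine ⟨⟨fun X u => F.map (↾(fold X u)) e, ?_⟩, ?_⟩
    · intro X Y u v f hf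
      have hcomp : f ∘ fold X u = fold Y v := by
        apply hfold_uniq
        calc (f ∘ fold X u) ∘ inT = f ∘ (fold X u ∘ inT) := rfl
          _ = f ∘ (u ∘ T.map (↾(fold X u))) := by rw [hfold_spec]
          _ = (f ∘ u) ∘ T.map (↾(fold X u)) := rfl
          _ = (v ∘ T.map (↾f)) ∘ T.map (↾(fold X u)) := by rw [hf]
          _ = v ∘ (T.map (↾f) ∘ T.map (↾(fold X u))) := rfl
          _ = v ∘ T.map (↾(f ∘ fold X u)) := by rw [Tmap_comp f (fold X u)]
      calc F.map (↾f) (F.map (↾(fold X u)) e) = F.map (↾(f ∘ fold X u)) e :=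
            (FunctorToTypes.map_comp_apply F (↾(fold X u)) (↾f) e).symm
        _ = F.map (↾(fold Y v)) e := by rw [hcomp]
    · show F.map (↾(fold μT inT)) e = e
      rw [hfold_id]
      exact FunctorToTypes.map_id_apply F e
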